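/- arXiv:2401.09887 — 6 statements merged into one kernel-verified Lean document; each statement's English description precedes it below -/
import Mathlib

section
/- Let L be a complete lattice with J ⊆ L completely join-generating and M ⊆ L completely meet-generating, and let ◇ : L → L be completely join-preserving. Then (∀ a ∈ L, ◇ (◇ a) ≤ ◇ a) if and only if (∀ j ∈ J, ∀ m ∈ M, ◇ j ≤ m → ◇ (◇ j) ≤ m). -/
theorem alba_correspondence_axiom_4
    {L : Type*} [CompleteLattice L] (J M : Set L)
    (hJ : ∀ u : L, u = sSup {j ∈ J | j ≤ u})
    (hM : ∀ u : L, u = sInf {m ∈ M | u ≤ m})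
    (d : L → L) (hd : ∀ S : Set L, d (sSup S) = sSup (d '' S)) :
    (∀ a : L, d (d a) ≤ d a) ↔
      (∀ j ∈ J, ∀ m ∈ M, d j ≤ m → d (d j) ≤ m) := by
  have hmono : Monotone d := by
    intro a b hab
    have h := hd {a, b}
    rw [sSup_pair, Set.image_pair, sSup_pair, sup_eq_right.mpr hab] at h
    rw [h]
    exact le_sup_left
  constructor
  · intro h j _ m _ hjm
    exact (h j).trans hjm
  · intro h a
    -- d a = sSup of d j over j ∈ J, j ≤ a
    have ha : d a = sSup (d '' {j ∈ J | j ≤ a}) := by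
      conv_lhs => rw [hJ a, hd]
    have hdda : d (d a) = sSup (d '' (d '' {j ∈ J | j ≤ a})) := by
      rw [ha, hd]
    rw [hdda]
    apply sSup_le
    rintro x ⟨y, ⟨j, ⟨hjJ, hja⟩, rfl⟩, rfl⟩
    -- need d (d j) ≤ d a
    rw [hM (d a)]
    apply le_sInf
    rintro m ⟨hmM, hdam⟩
    exact h j hjJ m hmM ((hmono hja).trans hdam)
end

section
/- Let L be a complete lattice with J ⊆ L completely join-generating and M ⊆ L completely meet-generating, and let □ : L → L be monotone. Then (∀ a ∈ L, □ a ≤ a) if and only if (∀ j ∈ J, ∀ m ∈ M, j ≤ □ m → j ≤ m). -/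
theorem alba_correspondence_axiom_T
    {L : Type*} [CompleteLattice L] (J M : Set L)
    (hJ : ∀ u : L, u = sSup {j ∈ J | j ≤ u})
    (hM : ∀ u : L, u = sInf {m ∈ M | u ≤ m})
    (b : L → L) (hb : Monotone b) :
    (∀ a : L, b a ≤ a) ↔ (∀ j ∈ J, ∀ m ∈ M, j ≤ b m → j ≤ m) := by
  constructor
  · intro h j _ m _ hjm
    exact hjm.trans (h m)
  · intro h a
    conv_rhs => rw [hM a]
    apply le_sInf
    rintro m ⟨hmM, ham⟩
    have hba : b a ≤ b m := hb ham
    rw [hJ (b a)]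
    apply sSup_le
    rintro j ⟨hjJ, hja⟩
    exact h j hjJ m hmM (hja.trans hba)
end

section
/- Let L be a complete lattice with J ⊆ L completely join-generating and M ⊆ L completely meet-generating, let ◇ : L → L be completely join-preserving with right adjoint ■, and □ : L → L completely meet-preserving. Then (∀ a ∈ L, a ≤ □ (◇ a)) if and only if (∀ j ∈ J, ∀ m ∈ M, ◇ j ≤ m → j ≤ □ m). -/
theorem alba_correspondence_axiom_B
    {L : Type*} [CompleteLattice L] (J M : Set L)
    (hJ : ∀ u : L, u = sSup {j ∈ J | j ≤ u})
    (hM : ∀ u : L, u = sInf {m ∈ M | u ≤ m})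
    (d bs b : L → L)
    (hd : ∀ S : Set L, d (sSup S) = sSup (d '' S))
    (hadj : ∀ u v : L, d u ≤ v ↔ u ≤ bs v)
    (hb : ∀ S : Set L, b (sInf S) = sInf (b '' S)) :
    (∀ a : L, a ≤ b (d a)) ↔ (∀ j ∈ J, ∀ m ∈ M, d j ≤ m → j ≤ b m) := by
  have dmono : ∀ u v : L, u ≤ v → d u ≤ d v := by
    intro u v huv
    exact (hadj u (d v)).mpr (le_trans huv ((hadj v (d v)).mp le_rfl))
  have bmono : ∀ u v : L, u ≤ v → b u ≤ b v := by
    intro u v huv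
    have h1 : u ⊓ v = u := inf_eq_left.mpr huv
    have h2 : b (sInf {u, v}) = sInf (b '' {u, v}) := hb {u, v}
    simp only [Set.image_pair, sInf_pair] at h2
    rw [h1] at h2
    rw [h2]; exact inf_le_right
  constructor
  · intro h j _ m hm hdjm
    exact le_trans (h j) (bmono _ _ hdjm)
  · intro h a
    calc a = sSup {j ∈ J | j ≤ a} := hJ a
      _ ≤ b (d a) := by
        apply sSup_le
        rintro j ⟨hjJ, hja⟩
        have : d a = sInf {m ∈ M | d a ≤ m} := hM (d a)
        rw [this, hb]
        apply le_sInf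
        rintro x ⟨m, ⟨hmM, hdam⟩, rfl⟩
        exact h j hjJ m hmM (le_trans (dmono j a hja) hdam)
end

section
/- Let L be a complete lattice with J ⊆ L completely join-generating and M ⊆ L completely meet-generating, let ◇ : L → L be completely join-preserving and □ : L → L completely meet-preserving with left adjoint ◆ (i.e., ◆ u ≤ v ↔ u ≤ □ v). Then (∀ a ∈ L, □ a ≤ ◇ a) if and only if (∀ j ∈ J, ∀ m ∈ M, ◇ (◆ j) ≤ m → j ≤ m). -/
theorem alba_correspondence_axiom_D
    {L : Type*} [CompleteLattice L] (J M : Set L)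
    (hJ : ∀ u : L, u = sSup {j ∈ J | j ≤ u})
    (hM : ∀ u : L, u = sInf {m ∈ M | u ≤ m})
    (d b bd : L → L)
    (hd : ∀ S : Set L, d (sSup S) = sSup (d '' S))
    (hb : ∀ S : Set L, b (sInf S) = sInf (b '' S))
    (hadj : ∀ u v : L, bd u ≤ v ↔ u ≤ b v) :
    (∀ a : L, b a ≤ d a) ↔ (∀ j ∈ J, ∀ m ∈ M, d (bd j) ≤ m → j ≤ m) := by
  have dmono : ∀ u v : L, u ≤ v → d u ≤ d v := by
    intro u v huv
    have h : sSup {u, v} = v := by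
      apply le_antisymm (sSup_le (by rintro x (rfl | rfl) <;> simp [huv])) (le_sSup (by simp))
    calc d u ≤ sSup (d '' {u, v}) := le_sSup ⟨u, by simp⟩
      _ = d (sSup {u, v}) := (hd _).symm
      _ = d v := by rw [h]
  constructor
  · intro H j _ m _ hdm
    have hj : j ≤ b (bd j) := (hadj j (bd j)).mp le_rfl
    exact hj.trans ((H (bd j)).trans hdm)
  · intro H a
    rw [hJ (b a), hM (d a)]
    apply sSup_le
    rintro j ⟨hjJ, hjb⟩
    apply le_sInf
    rintro m ⟨hmM, hdm⟩
    have : bd j ≤ a := (hadj j a).mpr hjb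
    exact H j hjJ m hmM ((dmono _ _ this).trans hdm)
end

section
/- Let L be a lattice that is a compact sublattice of a complete lattice L', and let f : L → L be finitely join-preserving (f ⊥ = ⊥ and f (x ⊔ y) = f x ⊔ f y). Define f^σ on closed elements k (meets of subsets of L) by f^σ k = ⨅ { f a | a ∈ L, k ≤ a }. Then f^σ is monotone on closed elements and agrees with f on L, i.e., f^σ a = f a for all a ∈ L. -/
theorem sigma_extension_monotone_and_extends
    {L' : Type*} [CompleteLattice L'] (K : Set L')
    (hbot : ⊥ ∈ K)
    (hsup : ∀ x ∈ K, ∀ y ∈ K, x ⊔ y ∈ K)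
    (hinf : ∀ x ∈ K, ∀ y ∈ K, x ⊓ y ∈ K)
    (hcompact : ∀ S T : Set L', S ⊆ K → T ⊆ K → sInf S ≤ sSup T →
      ∃ S' T' : Set L', S' ⊆ S ∧ T' ⊆ T ∧ S'.Finite ∧ T'.Finite ∧
        sInf S' ≤ sSup T')
    (f : L' → L')
    (hf_bot : f ⊥ = ⊥)
    (hf_sup : ∀ x ∈ K, ∀ y ∈ K, f (x ⊔ y) = f x ⊔ f y)
    -- the σ-extension on closed elements
    (fσ : L' → L')
    (hfσ : ∀ k : L', fσ k = sInf (f '' {a ∈ K | k ≤ a})) :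
    (∀ k₁ k₂ : L',
      (∃ S ⊆ K, k₁ = sInf S) → (∃ S ⊆ K, k₂ = sInf S) →
      k₁ ≤ k₂ → fσ k₁ ≤ fσ k₂) ∧
    (∀ a ∈ K, fσ a = f a) := by
  constructor
  · intro k₁ k₂ _ _ hle
    rw [hfσ, hfσ]
    apply sInf_le_sInf
    apply Set.image_mono
    intro a ha
    exact ⟨ha.1, hle.trans ha.2⟩
  · intro a ha
    rw [hfσ]
    apply le_antisymm
    · exact sInf_le ⟨a, ⟨ha, le_rfl⟩, rfl⟩
    · apply le_sInf
      rintro x ⟨b, ⟨hb, hab⟩, rfl⟩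
      have := hf_sup a ha b hb
      rw [sup_eq_right.mpr hab] at this
      rw [this]
      exact le_sup_left
end

section
/- Let L be a lattice that is a dense and compact sublattice of a complete lattice L'. If f : L → L is finitely meet-preserving, then its π-extension, defined on open elements o by f^π o = ⨆ { f a | a ∈ L, a ≤ o } and on arbitrary u by f^π u = ⨅ { f^π o | o open, u ≤ o }, agrees with f on elements of L. -/
theorem pi_extension_extends
    {L' : Type*} [CompleteLattice L'] (K : Set L')
    (htop : ⊤ ∈ K)
    (hsup : ∀ x ∈ K, ∀ y ∈ K, x ⊔ y ∈ K)
    (hinf : ∀ x ∈ K, ∀ y ∈ K, x ⊓ y ∈ K)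
    (hdense : ∀ u : L',
      (∃ F : Set L', (∀ x ∈ F, ∃ S ⊆ K, x = sInf S) ∧ u = sSup F) ∧
      (∃ G : Set L', (∀ x ∈ G, ∃ S ⊆ K, x = sSup S) ∧ u = sInf G))
    (hcompact : ∀ S T : Set L', S ⊆ K → T ⊆ K → sInf S ≤ sSup T →
      ∃ S' T' : Set L', S' ⊆ S ∧ T' ⊆ T ∧ S'.Finite ∧ T'.Finite ∧
        sInf S' ≤ sSup T')
    (f : L' → L')
    (hf_top : f ⊤ = ⊤)
    (hf_inf : ∀ x ∈ K, ∀ y ∈ K, f (x ⊓ y) = f x ⊓ f y)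
    -- the π-extension: first on open elements, then on arbitrary elements
    (fπO fπ : L' → L')
    (hfπO : ∀ o : L', fπO o = sSup (f '' {a ∈ K | a ≤ o}))
    (hfπ : ∀ u : L', fπ u = sInf (fπO '' {o | (∃ S ⊆ K, o = sSup S) ∧ u ≤ o})) :
    ∀ a ∈ K, fπ a = f a := by
  intro a ha
  have hmono : ∀ x ∈ K, ∀ y ∈ K, x ≤ y → f x ≤ f y := by
    intro x hx y hy hxy
    have : f (x ⊓ y) = f x ⊓ f y := hf_inf x hx y hy
    rw [inf_eq_left.mpr hxy] at this
    rw [this]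
    exact inf_le_right
  rw [hfπ]
  apply le_antisymm
  · -- fπ a ≤ f a, using o = a (open via S = {a})
    have hmem : fπO a ∈ fπO '' {o | (∃ S ⊆ K, o = sSup S) ∧ a ≤ o} := by
      refine ⟨a, ⟨⟨{a}, Set.singleton_subset_iff.mpr ha, (sSup_singleton).symm⟩, le_rfl⟩, rfl⟩
    refine le_trans (sInf_le hmem) ?_
    rw [hfπO]
    apply sSup_le
    rintro x ⟨b, ⟨hbK, hba⟩, rfl⟩
    exact hmono b hbK a ha hba
  · apply le_sInf
    rintro x ⟨o, ⟨⟨S, hSK, rfl⟩, hao⟩, rfl⟩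
    rw [hfπO]
    exact le_sSup ⟨a, ⟨ha, hao⟩, rfl⟩
end
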